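/- For positive integers s_1, ..., s_r and s such that the relevant series converge absolutely, the Mordell–Tornheim value satisfies the identity T(s_1, ..., s_r; s) = ∑_{j=1}^r ∑_{(a_k)_{k≠j}, 0 ≤ a_k ≤ s_k − 1} M_j · T_{r−1}(s_1 − a_1, ..., ŝ_j, ..., s_r − a_r, s + s_j + A_j), where the hat denotes omission of the j-th entry, A_j := ∑_{k≠j} a_k, and M_j := (s_j + A_j − 1)! / ((s_j − 1)! · ∏_{k≠j} a_k!). -/

import Mathlib

/-- The term of the Mordell–Tornheim series `T(s_1, …, s_r; s)` with positive integer
arguments, indexed by tuples of positive integers `m_1, …, m_r`. -/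
noncomputable def MTterm (r : ℕ) (s' : Fin r → ℕ) (s : ℕ)
    (m : {m : Fin r → ℕ // ∀ j, 0 < m j}) : ℝ :=
  1 / ((∏ j, (m.1 j : ℝ) ^ s' j) * ((∑ j, m.1 j : ℕ) : ℝ) ^ s)

/-- The Mordell–Tornheim zeta value `T(s_1, …, s_r; s)`. -/
noncomputable def MT (r : ℕ) (s' : Fin r → ℕ) (s : ℕ) : ℝ :=
  ∑' m, MTterm r s' s m

/-- The term of the auxiliary series
`T_l(t_1, …, t_r) = ∑_{m_1, …, m_r ≥ 1} (∏_{k ≤ l} m_k^{-t_k})(∏_{k > l} n_k^{-t_k})`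
where `n_k = m_1 + ⋯ + m_k` (here `k : Fin r` is 0-indexed, so the first `l`
coordinates are the `m`-type factors). -/
noncomputable def Tlterm (r l : ℕ) (t : Fin r → ℕ)
    (m : {m : Fin r → ℕ // ∀ j, 0 < m j}) : ℝ :=
  ∏ k : Fin r,
    if (k : ℕ) < l then 1 / ((m.1 k : ℝ) ^ t k)
    else 1 / (((∑ j ∈ Finset.univ.filter (fun j : Fin r => j ≤ k), m.1 j : ℕ) : ℝ) ^ t k)

/-- The value `T_l(t_1, …, t_r)`. -/
noncomputable def Tl (r l : ℕ) (t : Fin r → ℕ) : ℝ :=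
  ∑' m, Tlterm r l t m

open Finset

noncomputable def Mc (d : ℕ) (t : ℕ) (a : Fin d → ℕ) : ℝ :=
  ((t + ∑ i, a i).factorial : ℝ) / ((t.factorial : ℝ) * ∏ i, ((a i).factorial : ℝ))

lemma prodfac_pos (d : ℕ) (a : Fin d → ℕ) : (0:ℝ) < ∏ i, ((a i).factorial : ℝ) :=
  Finset.prod_pos fun i _ => by exact_mod_cast (a i).factorial_pos

lemma Mc_t_step (d t : ℕ) (a : Fin d → ℕ) :
    (if 1 ≤ t then Mc d (t-1) a else 0) = Mc d t a * t / (t + ∑ i, a i) := by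
  rcases Nat.eq_zero_or_pos t with h | h
  · subst h; simp
  · obtain ⟨t', rfl⟩ : ∃ t', t = t' + 1 := ⟨t - 1, by omega⟩
    rw [if_pos (by omega)]
    have hP := prodfac_pos d a
    set A := ∑ i, a i
    have e1 : (t' + 1) + A = (t' + A) + 1 := by ring
    simp only [Mc, Nat.add_sub_cancel, e1, Nat.factorial_succ]
    push_cast
    have h1 : ((t' + A).factorial : ℝ) ≠ 0 := by exact_mod_cast (t' + A).factorial_ne_zero
    have h2 : (t'.factorial : ℝ) ≠ 0 := by exact_mod_cast t'.factorial_ne_zero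
    field_simp
    simp only [A]
    rw [show t' + 1 + ∑ i, a i = (t' + ∑ i, a i) + 1 by ring, Nat.factorial_succ]
    push_cast
    ring

lemma Mc_p_step (d t : ℕ) (a : Fin d → ℕ) (p : Fin d) :
    (if 1 ≤ a p then Mc d t (Function.update a p (a p - 1)) else 0)
      = Mc d t a * (a p) / (t + ∑ i, a i) := by
  classical
  rcases Nat.eq_zero_or_pos (a p) with h | h
  · rw [if_neg (by omega)]; rw [h]; simp
  · obtain ⟨c, hc⟩ : ∃ c, a p = c + 1 := ⟨a p - 1, by omega⟩
    rw [if_pos (by omega), hc]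
    have hsum : ∑ i, a i = (c + 1) + ∑ i ∈ univ \ {p}, a i := by
      rw [← Finset.erase_eq, ← Finset.add_sum_erase _ _ (mem_univ p), hc]
    have hsum2 : ∑ i, Function.update a p (c + 1 - 1) i
        = c + ∑ i ∈ univ \ {p}, a i := by
      rw [Finset.sum_update_of_mem (mem_univ p)]
      omega
    have hprod : (fun i => (((Function.update a p (c + 1 - 1)) i).factorial : ℝ))
        = Function.update (fun i => ((a i).factorial : ℝ)) p ((c.factorial : ℝ)) := by
      funext i
      rcases eq_or_ne i p with rfl | hip
      · simp
      · simp [Function.update_of_ne hip]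
    have hprodeq : ∏ i, (((Function.update a p (c + 1 - 1)) i).factorial : ℝ)
        = (c.factorial : ℝ) * ∏ i ∈ univ \ {p}, ((a i).factorial : ℝ) := by
      rw [hprod, Finset.prod_update_of_mem (mem_univ p)]
    have hprodeq2 : ∏ i, ((a i).factorial : ℝ)
        = ((c+1).factorial : ℝ) * ∏ i ∈ univ \ {p}, ((a i).factorial : ℝ) := by
      rw [← Finset.erase_eq, ← Finset.mul_prod_erase _ _ (mem_univ p), hc]
    set B := ∑ i ∈ univ \ {p}, a i
    set Q := ∏ i ∈ univ \ {p}, ((a i).factorial : ℝ) with hQ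
    have hQpos : (0:ℝ) < Q := Finset.prod_pos fun i _ => by exact_mod_cast (a i).factorial_pos
    simp only [Mc, hsum, hsum2, hprodeq, hprodeq2]
    have e1 : t + (c + 1 + B) = (t + (c + B)) + 1 := by ring
    rw [e1, Nat.factorial_succ, Nat.factorial_succ c]
    push_cast
    have h1 : ((t + (c + B)).factorial : ℝ) ≠ 0 := by exact_mod_cast Nat.factorial_ne_zero _
    have h2 : (t.factorial : ℝ) ≠ 0 := by exact_mod_cast Nat.factorial_ne_zero _
    have h3 : (c.factorial : ℝ) ≠ 0 := by exact_mod_cast Nat.factorial_ne_zero _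
    field_simp
    ring

lemma Mc_split (d : ℕ) (t : ℕ) (a : Fin d → ℕ) :
    Mc d t a = (if 1 ≤ t then Mc d (t - 1) a else if a = 0 then 1 else 0)
      + ∑ p : Fin d, (if 1 ≤ a p then Mc d t (Function.update a p (a p - 1)) else 0) := by
  classical
  by_cases h0 : t = 0 ∧ a = 0
  · obtain ⟨rfl, rfl⟩ := h0
    simp [Mc]
  · have hpos : 1 ≤ t + ∑ i, a i := by
      rcases Nat.eq_zero_or_pos t with h | h
      · have ha : a ≠ 0 := fun hh => h0 ⟨h, hh⟩
        have : ∃ p, a p ≠ 0 := by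
          by_contra hc
          push_neg at hc
          exact ha (funext fun p => hc p)
        obtain ⟨p, hp⟩ := this
        have : 1 ≤ ∑ i, a i := le_trans (by omega) (Finset.single_le_sum
          (f := a) (fun i _ => Nat.zero_le _) (mem_univ p))
        omega
      · omega
    have key : (if 1 ≤ t then Mc d (t - 1) a else if a = 0 then 1 else 0)
        = (if 1 ≤ t then Mc d (t - 1) a else 0) := by
      rcases Nat.eq_zero_or_pos t with h | h
      · have ha : a ≠ 0 := fun hh => h0 ⟨h, hh⟩
        rw [if_neg (show ¬1 ≤ t by omega), if_neg ha, if_neg (show ¬1 ≤ t by omega)]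
      · rw [if_pos (by omega), if_pos (by omega)]
    rw [key, Mc_t_step, Finset.sum_congr rfl fun p _ => Mc_p_step d t a p]
    set A := ∑ i, a i with hAdef
    have hA : ((A : ℝ)) = ∑ p : Fin d, ((a p : ℝ)) := by
      rw [hAdef]; push_cast; rfl
    have hne : ((t : ℝ) + (A : ℝ)) ≠ 0 := by
      have : ((t + A : ℕ) : ℝ) ≠ 0 := Nat.cast_ne_zero.mpr (by omega)
      push_cast at this
      exact this
    rw [← Finset.sum_div, ← Finset.mul_sum, ← hA]
    field_simp
noncomputable def gg (d : ℕ) (x : Fin (d+1) → ℝ) (σ : Fin (d+1) → ℕ) (c : ℕ)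
    (j : Fin (d+1)) (a : Fin d → ℕ) : ℝ :=
  (∏ i : Fin d, x (j.succAbove i) ^ (σ (j.succAbove i) - a i))⁻¹ *
    ((∑ k, x k) ^ (c + σ j + ∑ i, a i))⁻¹

def big (d : ℕ) (σ : Fin (d+1) → ℕ) (j : Fin (d+1)) : Finset (Fin d → ℕ) :=
  Fintype.piFinset (fun i => Finset.range (σ (j.succAbove i)))

noncomputable def e1c (d : ℕ) (σ : Fin (d+1) → ℕ) (j : Fin (d+1)) (a : Fin d → ℕ) : ℝ :=
  if 2 ≤ σ j then Mc d (σ j - 2) a else if a = 0 then 1 else 0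

noncomputable def CC (d : ℕ) (x : Fin (d+1) → ℝ) (σ : Fin (d+1) → ℕ) (c : ℕ)
    (p : Fin (d+1)) : ℝ :=
  ∑ a ∈ big d σ p, e1c d σ p a * gg d x σ c p a

noncomputable def SS (d : ℕ) (x : Fin (d+1) → ℝ) (σ : Fin (d+1) → ℕ) (c : ℕ)
    (j : Fin (d+1)) (p' : Fin d) : ℝ :=
  ∑ a ∈ big d σ j,
    (if 1 ≤ a p' then Mc d (σ j - 1) (Function.update a p' (a p' - 1)) else 0) * gg d x σ c j a

noncomputable def FF (d : ℕ) (x : Fin (d+1) → ℝ) (σ : Fin (d+1) → ℕ) (c : ℕ)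
    (p j : Fin (d+1)) : ℝ :=
  if h : p = j then 0 else SS d x σ c j (Fin.exists_succAbove_eq h).choose

lemma prod_pow_update (d : ℕ) (x : Fin (d+1) → ℝ) (s : Fin (d+1) → ℕ) (p : Fin (d+1)) (c : ℕ) :
    ∏ k, x k ^ (Function.update s p c k)
      = x p ^ c * ∏ i : Fin d, x (p.succAbove i) ^ (s (p.succAbove i)) := by
  rw [Fin.prod_univ_succAbove (fun k => x k ^ (Function.update s p c k)) p]
  simp only [Function.update_self]
  congr 1
  exact Finset.prod_congr rfl fun i _ => by
    rw [Function.update_of_ne (Fin.succAbove_ne p i)]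

lemma inv_prod_update (d : ℕ) (x : Fin (d+1) → ℝ) (hx : ∀ k, 0 < x k)
    (s : Fin (d+1) → ℕ) (p : Fin (d+1)) (hp : 1 ≤ s p) :
    (∏ k, x k ^ (Function.update s p (s p - 1) k))⁻¹ = x p * (∏ k, x k ^ s k)⁻¹ := by
  have key : ∏ k, x k ^ s k = x p * ∏ k, x k ^ (Function.update s p (s p - 1) k) := by
    rw [prod_pow_update]
    have h2 : ∏ k, x k ^ s k
        = x p ^ (s p) * ∏ i : Fin d, x (p.succAbove i) ^ (s (p.succAbove i)) := by
      have h3 := prod_pow_update d x s p (s p)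
      rw [← h3]
      exact Finset.prod_congr rfl fun k _ => by
        rcases eq_or_ne k p with rfl | hk
        · rw [Function.update_self]
        · rw [Function.update_of_ne hk]
    rw [h2]
    have h5 : x p ^ s p = x p ^ (s p - 1) * x p := by
      rw [← pow_succ]
      congr 1
      omega
    rw [h5]
    ring
  have h1 : (∏ k, x k ^ s k) ≠ 0 :=
    ne_of_gt (Finset.prod_pos fun k _ => pow_pos (hx k) _)
  have h2 : x p ≠ 0 := ne_of_gt (hx p)
  rw [key]
  rw [mul_inv]
  rw [← mul_assoc, mul_inv_cancel₀ h2, one_mul]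

lemma zero_mem_big (d : ℕ) (σ : Fin (d+1) → ℕ) (hs : ∀ k, 1 ≤ σ k) (j : Fin (d+1)) :
    (0 : Fin d → ℕ) ∈ big d σ j := by
  rw [big, Fintype.mem_piFinset]
  intro i
  rw [Finset.mem_range]
  exact lt_of_lt_of_le Nat.zero_lt_one (hs _)

lemma sum_update_nat (d : ℕ) (a : Fin d → ℕ) (p : Fin d) (v : ℕ) :
    ∑ i, Function.update a p v i = v + ∑ i ∈ Finset.univ \ {p}, a i :=
  Finset.sum_update_of_mem (Finset.mem_univ p) _ _

lemma sum_split_nat (d : ℕ) (a : Fin d → ℕ) (p : Fin d) :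
    ∑ i, a i = a p + ∑ i ∈ Finset.univ \ {p}, a i := by
  rw [← Finset.erase_eq, ← Finset.add_sum_erase _ _ (Finset.mem_univ p)]

lemma reindexS (d : ℕ) (x : Fin (d+1) → ℝ) (s : Fin (d+1) → ℕ) (b : ℕ)
    (p q : Fin (d+1)) (p' : Fin d) (hq : q.succAbove p' = p) (hsp : 1 ≤ s p) :
    (∑ a' ∈ big d (Function.update s p (s p - 1)) q,
      Mc d (s q - 1) a' * gg d x (Function.update s p (s p - 1)) (b+1) q a')
      = SS d x s b q p' := by
  classical
  have hqp : q ≠ p := by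
    rw [← hq]; exact (Fin.succAbove_ne q p').symm
  set s₁ := Function.update s p (s p - 1) with hs₁
  have hs₁q : s₁ q = s q := Function.update_of_ne hqp _ _
  have hs₁sa : ∀ i : Fin d, i ≠ p' → s₁ (q.succAbove i) = s (q.succAbove i) := by
    intro i hi
    apply Function.update_of_ne
    rw [← hq]
    exact fun hcon => hi (Fin.succAbove_right_injective hcon)
  have hs₁p' : s₁ (q.succAbove p') = s p - 1 := by
    rw [hq]; exact Function.update_self _ _ _
  rw [SS]
  have step1 : ∑ a ∈ big d s q,
      (if 1 ≤ a p' then Mc d (s q - 1) (Function.update a p' (a p' - 1)) else 0) * gg d x s b q a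
      = ∑ a ∈ (big d s q).filter (fun a => 1 ≤ a p'),
          Mc d (s q - 1) (Function.update a p' (a p' - 1)) * gg d x s b q a := by
    rw [Finset.sum_filter]
    exact Finset.sum_congr rfl fun a _ => by
      rcases le_or_gt 1 (a p') with h | h
      · rw [if_pos h, if_pos h]
      · rw [if_neg (by omega), if_neg (by omega), zero_mul]
  rw [step1]
  refine Finset.sum_bij' (i := fun a' _ => Function.update a' p' (a' p' + 1))
    (j := fun a _ => Function.update a p' (a p' - 1)) ?_ ?_ ?_ ?_ ?_
  · -- i maps into filter
    intro a' ha'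
    rw [Finset.mem_filter]
    constructor
    · rw [big, Fintype.mem_piFinset]
      intro k
      rw [Finset.mem_range]
      rw [big, Fintype.mem_piFinset] at ha'
      rcases eq_or_ne k p' with rfl | hk
      · rw [Function.update_self]
        have := ha' k
        rw [Finset.mem_range, hs₁p'] at this
        rw [hq]
        omega
      · rw [Function.update_of_ne hk]
        have := ha' k
        rw [Finset.mem_range, hs₁sa k hk] at this
        exact this
    · rw [Function.update_self]; omega
  · -- j maps back into big s₁ q
    intro a ha
    rw [Finset.mem_filter] at ha
    obtain ⟨ha, hap⟩ := ha
    rw [big, Fintype.mem_piFinset] at ha ⊢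
    intro k
    rw [Finset.mem_range]
    rcases eq_or_ne k p' with rfl | hk
    · rw [Function.update_self, hs₁p']
      have := ha k
      rw [Finset.mem_range, hq] at this
      omega
    · rw [Function.update_of_ne hk, hs₁sa k hk]
      have := ha k
      rw [Finset.mem_range] at this
      exact this
  · -- left inverse
    intro a' _
    funext k
    rcases eq_or_ne k p' with rfl | hk
    · rw [Function.update_self, Function.update_self]
      omega
    · rw [Function.update_of_ne hk, Function.update_of_ne hk]
  · -- right inverse
    intro a ha
    rw [Finset.mem_filter] at ha
    obtain ⟨-, hap⟩ := ha
    funext k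
    rcases eq_or_ne k p' with rfl | hk
    · rw [Function.update_self, Function.update_self]
      omega
    · rw [Function.update_of_ne hk, Function.update_of_ne hk]
  · -- values agree
    intro a' ha'
    have harg : Function.update (Function.update a' p' (a' p' + 1)) p'
        ((Function.update a' p' (a' p' + 1)) p' - 1) = a' := by
      funext k
      rcases eq_or_ne k p' with rfl | hk
      · rw [Function.update_idem, Function.update_self, Function.update_self]
        omega
      · rw [Function.update_of_ne hk, Function.update_of_ne hk]
    rw [harg]
    congr 1
    rw [gg, gg]
    have hprod : ∏ i : Fin d, x (q.succAbove i) ^ (s₁ (q.succAbove i) - a' i)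
        = ∏ i : Fin d, x (q.succAbove i)
            ^ (s (q.succAbove i) - (Function.update a' p' (a' p' + 1)) i) := by
      refine Finset.prod_congr rfl fun i _ => ?_
      rcases eq_or_ne i p' with rfl | hi
      · rw [Function.update_self, hs₁p', hq]
        congr 1
        omega
      · rw [Function.update_of_ne hi, hs₁sa i hi]
    have hexp : (b + 1) + s₁ q + ∑ i, a' i
        = b + s q + ∑ i, (Function.update a' p' (a' p' + 1)) i := by
      rw [hs₁q, sum_update_nat, sum_split_nat d a' p']
      omega
    rw [hprod, hexp]
lemma sum_update_nat' {ι : Type*} [Fintype ι] [DecidableEq ι] (a : ι → ℕ) (p : ι) (v : ℕ) :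
    ∑ i, Function.update a p v i = v + ∑ i ∈ Finset.univ \ {p}, a i :=
  Finset.sum_update_of_mem (Finset.mem_univ p) _ _

lemma sum_split_nat' {ι : Type*} [Fintype ι] [DecidableEq ι] (a : ι → ℕ) (p : ι) :
    ∑ i, a i = a p + ∑ i ∈ Finset.univ \ {p}, a i := by
  rw [← Finset.erase_eq, ← Finset.add_sum_erase _ _ (Finset.mem_univ p)]

lemma claimB (d : ℕ) (x : Fin (d+1) → ℝ) (hx : ∀ k, 0 < x k) (s : Fin (d+1) → ℕ)
    (hs : ∀ k, 1 ≤ s k) (b : ℕ) (p : Fin (d+1))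
    (ihp : 2 ≤ s p →
      ((∏ k, x k ^ (Function.update s p (s p - 1) k))⁻¹ * ((∑ k, x k) ^ (b+1))⁻¹
        = ∑ j, ∑ a ∈ big d (Function.update s p (s p - 1)) j,
            Mc d ((Function.update s p (s p - 1)) j - 1) a
              * gg d x (Function.update s p (s p - 1)) (b+1) j a)) :
    (∏ k, x k ^ (Function.update s p (s p - 1) k))⁻¹ * ((∑ k, x k) ^ (b+1))⁻¹
      = CC d x s b p + ∑ j, FF d x s b p j := by
  classical
  by_cases h2 : 2 ≤ s p
  · rw [ihp h2]
    set s₁ := Function.update s p (s p - 1) with hs₁def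
    have hbig : big d s₁ p = big d s p := by
      rw [big, big]
      congr 1
      funext i
      rw [hs₁def, Function.update_of_ne (Fin.succAbove_ne p i)]
    have hinnerp : (∑ a ∈ big d s₁ p, Mc d (s₁ p - 1) a * gg d x s₁ (b+1) p a)
        = CC d x s b p := by
      rw [hbig, CC]
      refine Finset.sum_congr rfl fun a _ => ?_
      have h1 : Mc d (s₁ p - 1) a = e1c d s p a := by
        have hval : s₁ p - 1 = s p - 2 := by
          rw [hs₁def, Function.update_self]; omega
        rw [hval, e1c, if_pos h2]
      have h3 : gg d x s₁ (b+1) p a = gg d x s b p a := by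
        rw [gg, gg]
        have hpr : ∏ i : Fin d, x (p.succAbove i) ^ (s₁ (p.succAbove i) - a i)
            = ∏ i : Fin d, x (p.succAbove i) ^ (s (p.succAbove i) - a i) := by
          refine Finset.prod_congr rfl fun i _ => ?_
          rw [hs₁def, Function.update_of_ne (Fin.succAbove_ne p i)]
        have hex : (b+1) + s₁ p + ∑ i, a i = b + s p + ∑ i, a i := by
          rw [hs₁def, Function.update_self]
          omega
        rw [hpr, hex]
      rw [h1, h3]
    have hinnerq : ∀ j' : Fin d,
        (∑ a ∈ big d s₁ (p.succAbove j'), Mc d (s₁ (p.succAbove j') - 1) a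
          * gg d x s₁ (b+1) (p.succAbove j') a)
          = FF d x s b p (p.succAbove j') := by
      intro j'
      set q := p.succAbove j' with hqdef
      have hpq : p ≠ q := Fin.ne_succAbove p j'
      have hs₁q : s₁ q = s q := Function.update_of_ne (Ne.symm hpq) _ _
      have hspec : q.succAbove (Fin.exists_succAbove_eq hpq).choose = p :=
        (Fin.exists_succAbove_eq hpq).choose_spec
      rw [FF, dif_neg hpq, ← reindexS d x s b p q _ hspec (hs p)]
      exact Finset.sum_congr rfl fun a _ => by rw [hs₁q]
    rw [Fin.sum_univ_succAbove
      (fun j => ∑ a ∈ big d s₁ j, Mc d (s₁ j - 1) a * gg d x s₁ (b+1) j a) p,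
      hinnerp, Finset.sum_congr rfl (fun j' _ => hinnerq j'),
      Fin.sum_univ_succAbove (fun j => FF d x s b p j) p, FF, dif_pos rfl, zero_add]
  · have hsp1 : s p = 1 := by have := hs p; omega
    have hgoalL : (∏ k, x k ^ (Function.update s p (s p - 1) k))
        = ∏ i : Fin d, x (p.succAbove i) ^ (s (p.succAbove i)) := by
      rw [prod_pow_update, hsp1]
      norm_num
    have hCC : CC d x s b p = gg d x s b p 0 := by
      rw [CC]
      have hc : ∀ a ∈ big d s p, e1c d s p a * gg d x s b p a
          = if a = 0 then gg d x s b p 0 else 0 := by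
        intro a _
        rw [e1c, if_neg h2]
        rcases eq_or_ne a 0 with rfl | ha
        · rw [if_pos rfl, if_pos rfl, one_mul]
        · rw [if_neg ha, if_neg ha, zero_mul]
      rw [Finset.sum_congr rfl hc,
        Finset.sum_ite_eq' (big d s p) 0 (fun _ => gg d x s b p 0),
        if_pos (zero_mem_big d s hs p)]
    have hFF : ∀ j, FF d x s b p j = 0 := by
      intro j
      rw [FF]
      split
      · rfl
      · next h =>
        have hspec : j.succAbove (Fin.exists_succAbove_eq h).choose = p :=
          (Fin.exists_succAbove_eq h).choose_spec
        rw [SS]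
        refine Finset.sum_eq_zero fun a ha => ?_
        rw [big, Fintype.mem_piFinset] at ha
        have hz := ha (Fin.exists_succAbove_eq h).choose
        rw [Finset.mem_range, hspec, hsp1] at hz
        rw [if_neg (by omega), zero_mul]
    rw [hgoalL, hCC, Finset.sum_congr rfl (fun j _ => hFF j), Finset.sum_const_zero, add_zero,
      gg]
    simp [hsp1]

lemma PF (d : ℕ) (x : Fin (d+1) → ℝ) (hx : ∀ k, 0 < x k) :
    ∀ N : ℕ, ∀ s : Fin (d+1) → ℕ, (∀ k, 1 ≤ s k) → ((∑ k, s k) ≤ N) → ∀ b : ℕ,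
    (∏ k, x k ^ s k)⁻¹ * ((∑ k, x k) ^ b)⁻¹
      = ∑ j, ∑ a ∈ big d s j, Mc d (s j - 1) a * gg d x s b j a := by
  classical
  intro N
  induction N with
  | zero =>
    intro s hs hsum b
    exfalso
    have h1 : 1 ≤ ∑ k, s k := le_trans (hs 0)
      (Finset.single_le_sum (fun k _ => Nat.zero_le _) (Finset.mem_univ 0))
    omega
  | succ N ih =>
    intro s hs hsum b
    have hn : 0 < ∑ k, x k := Finset.sum_pos (fun k _ => hx k) Finset.univ_nonempty
    have stepA : (∏ k, x k ^ s k)⁻¹ * ((∑ k, x k) ^ b)⁻¹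
        = ∑ p, (∏ k, x k ^ (Function.update s p (s p - 1) k))⁻¹ * ((∑ k, x k) ^ (b+1))⁻¹ := by
      have h1 : ∀ p : Fin (d+1),
          (∏ k, x k ^ (Function.update s p (s p - 1) k))⁻¹ * ((∑ k, x k) ^ (b+1))⁻¹
          = x p * ((∏ k, x k ^ s k)⁻¹ * ((∑ k, x k) ^ (b+1))⁻¹) := by
        intro p
        rw [inv_prod_update d x hx s p (hs p)]
        ring
      rw [Finset.sum_congr rfl fun p _ => h1 p, ← Finset.sum_mul]
      rw [pow_succ]
      have h2 : (∏ k, x k ^ s k) ≠ 0 :=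
        ne_of_gt (Finset.prod_pos fun k _ => pow_pos (hx k) _)
      have h3 : ((∑ k, x k) : ℝ) ≠ 0 := ne_of_gt hn
      have h4 : ((∑ k, x k) : ℝ) ^ b ≠ 0 := pow_ne_zero _ h3
      field_simp
    have ihclaim : ∀ p : Fin (d+1), 2 ≤ s p →
        ((∏ k, x k ^ (Function.update s p (s p - 1) k))⁻¹ * ((∑ k, x k) ^ (b+1))⁻¹
          = ∑ j, ∑ a ∈ big d (Function.update s p (s p - 1)) j,
              Mc d ((Function.update s p (s p - 1)) j - 1) a
                * gg d x (Function.update s p (s p - 1)) (b+1) j a) := by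
      intro p hp2
      refine ih (Function.update s p (s p - 1)) ?_ ?_ (b+1)
      · intro k
        rcases eq_or_ne k p with rfl | hk
        · rw [Function.update_self]; omega
        · rw [Function.update_of_ne hk]; exact hs k
      · have := sum_update_nat' s p (s p - 1)
        have := sum_split_nat' s p
        omega
    rw [stepA, Finset.sum_congr rfl (fun p _ => claimB d x hx s hs b p (ihclaim p)),
      Finset.sum_add_distrib, Finset.sum_comm]
    have hswap : ∀ j : Fin (d+1), (∑ p, FF d x s b p j) = ∑ p' : Fin d, SS d x s b j p' := by
      intro j
      rw [Fin.sum_univ_succAbove (fun p => FF d x s b p j) j, FF, dif_pos rfl, zero_add]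
      refine Finset.sum_congr rfl fun p' _ => ?_
      have hne : j.succAbove p' ≠ j := Fin.succAbove_ne j p'
      rw [FF, dif_neg hne]
      congr 1
      have hspec : j.succAbove (Fin.exists_succAbove_eq hne).choose = j.succAbove p' :=
        (Fin.exists_succAbove_eq hne).choose_spec
      exact Fin.succAbove_right_injective hspec
    rw [Finset.sum_congr rfl (fun j _ => hswap j)]
    have hfinal : ∀ j : Fin (d+1),
        (∑ a ∈ big d s j, Mc d (s j - 1) a * gg d x s b j a)
          = CC d x s b j + ∑ p' : Fin d, SS d x s b j p' := by
      intro j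
      have hMc : ∀ a : Fin d → ℕ, Mc d (s j - 1) a
          = e1c d s j a + ∑ p' : Fin d,
              (if 1 ≤ a p' then Mc d (s j - 1) (Function.update a p' (a p' - 1)) else 0) := by
        intro a
        have h1 := Mc_split d (s j - 1) a
        have h2 : (if 1 ≤ s j - 1 then Mc d (s j - 1 - 1) a else if a = 0 then 1 else 0)
            = e1c d s j a := by
          rcases le_or_gt 2 (s j) with h | h
          · have hval : s j - 1 - 1 = s j - 2 := by omega
            rw [if_pos (show 1 ≤ s j - 1 by omega), hval, e1c, if_pos h]
          · rw [e1c, if_neg (show ¬ 2 ≤ s j by omega),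
              if_neg (show ¬ 1 ≤ s j - 1 by omega)]
        rw [h1, h2]
      have hdist : ∀ a ∈ big d s j, Mc d (s j - 1) a * gg d x s b j a
          = e1c d s j a * gg d x s b j a + ∑ p' : Fin d,
              (if 1 ≤ a p' then Mc d (s j - 1) (Function.update a p' (a p' - 1)) else 0)
                * gg d x s b j a := by
        intro a _
        rw [hMc a, add_mul, Finset.sum_mul]
      rw [Finset.sum_congr rfl hdist, Finset.sum_add_distrib]
      congr 1
      rw [Finset.sum_comm]
      rfl
    rw [Finset.sum_congr rfl (fun j _ => hfinal j), Finset.sum_add_distrib]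
lemma sum_pi_fin_eq (d : ℕ) (n : Fin d → ℕ) (f : (Fin d → ℕ) → ℝ) :
    ∑ a : (∀ i : Fin d, Fin (n i)), f (fun i => (a i : ℕ))
      = ∑ a ∈ Fintype.piFinset (fun i => Finset.range (n i)), f a := by
  classical
  refine Finset.sum_bij' (i := fun (a : ∀ i : Fin d, Fin (n i)) _ => fun i => (a i : ℕ))
    (j := fun a ha => fun i => (⟨a i, by
      rw [Fintype.mem_piFinset] at ha
      simpa using (Finset.mem_range.1 (ha i))⟩ : Fin (n i))) ?_ ?_ ?_ ?_ ?_
  · intro a _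
    rw [Fintype.mem_piFinset]
    intro i
    rw [Finset.mem_range]
    exact (a i).isLt
  · intro a _
    exact Finset.mem_univ _
  · intro a _
    funext i
    rfl
  · intro a _
    funext i
    rfl
  · intro a _
    rfl

def permMap (d : ℕ) (j : Fin (d+1)) : Fin (d+1) → Fin (d+1) :=
  Fin.snoc (fun i => j.succAbove i) j

lemma permMap_bij (d : ℕ) (j : Fin (d+1)) : Function.Bijective (permMap d j) := by
  rw [Fintype.bijective_iff_injective_and_card]
  refine ⟨?_, rfl⟩
  intro u v huv
  induction u using Fin.lastCases with
  | last =>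
    induction v using Fin.lastCases with
    | last => rfl
    | cast i =>
      exfalso
      rw [permMap, Fin.snoc_last, Fin.snoc_castSucc] at huv
      exact Fin.ne_succAbove j i huv
  | cast i =>
    induction v using Fin.lastCases with
    | last =>
      exfalso
      rw [permMap, Fin.snoc_last, Fin.snoc_castSucc] at huv
      exact Fin.ne_succAbove j i huv.symm
    | cast i' =>
      rw [permMap, Fin.snoc_castSucc, Fin.snoc_castSucc] at huv
      rw [Fin.succAbove_right_injective huv]

noncomputable def permEquiv (d : ℕ) (j : Fin (d+1)) : Fin (d+1) ≃ Fin (d+1) :=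
  Equiv.ofBijective _ (permMap_bij d j)

noncomputable def mEquiv (d : ℕ) (j : Fin (d+1)) :
    {m : Fin (d+1) → ℕ // ∀ k, 0 < m k} ≃ {m : Fin (d+1) → ℕ // ∀ k, 0 < m k} where
  toFun m := ⟨fun k => m.1 (permMap d j k), fun k => m.2 _⟩
  invFun m := ⟨fun k => m.1 ((permEquiv d j).symm k), fun k => m.2 _⟩
  left_inv m := Subtype.ext (funext fun k => by
    show m.1 (permMap d j ((permEquiv d j).symm k)) = m.1 k
    have : permMap d j ((permEquiv d j).symm k) = k :=
      (permEquiv d j).apply_symm_apply k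
    rw [this])
  right_inv m := Subtype.ext (funext fun k => by
    show m.1 ((permEquiv d j).symm (permMap d j k)) = m.1 k
    have : (permEquiv d j).symm (permMap d j k) = k :=
      (permEquiv d j).symm_apply_apply k
    rw [this])

lemma Tlterm_eq_gg (d : ℕ) (s' : Fin (d+1) → ℕ) (s : ℕ) (j : Fin (d+1)) (a : Fin d → ℕ)
    (m : {m : Fin (d+1) → ℕ // ∀ k, 0 < m k}) :
    Tlterm (d+1) d (Fin.snoc (fun i : Fin d => s' (j.succAbove i) - a i) (s + s' j + ∑ i, a i))
        ((mEquiv d j) m)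
      = gg d (fun k => (m.1 k : ℝ)) s' s j a := by
  rw [Tlterm, gg, Fin.prod_univ_castSucc]
  congr 1
  · rw [← Finset.prod_inv_distrib]
    refine Finset.prod_congr rfl fun i _ => ?_
    rw [if_pos (by simpa using i.isLt), Fin.snoc_castSucc]
    have hm : ((mEquiv d j) m).1 i.castSucc = m.1 (j.succAbove i) := by
      show m.1 (permMap d j i.castSucc) = _
      rw [permMap, Fin.snoc_castSucc]
    rw [hm, one_div]
  · have hd : ¬ ((Fin.last d : ℕ) < d) := by simp
    rw [if_neg hd, Fin.snoc_last]
    have hfil : Finset.univ.filter (fun j' : Fin (d+1) => j' ≤ Fin.last d) = Finset.univ :=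
      Finset.filter_true_of_mem fun j' _ => Fin.le_last j'
    rw [hfil]
    have hsum : ∑ k, ((mEquiv d j) m).1 k = ∑ k, m.1 k := by
      show ∑ k, m.1 (permMap d j k) = _
      exact (permEquiv d j).sum_comp (fun k => m.1 k)
    rw [hsum, one_div]
    congr 1
    push_cast
    rfl


/-- **Step (7): first reduction of a Mordell–Tornheim value.**
For positive integers `s_1, …, s_r, s` (depth `r = d + 1 ≥ 1`) such that all the relevant
series converge absolutely,
`T(s_1, …, s_r; s) = ∑_{j=1}^{r} ∑_{(a_k)_{k≠j}, 0 ≤ a_k ≤ s_k - 1}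
   M_j · T_{r-1}(…, s_k - a_k, …, s + s_j + A_j)`,
where the arguments `s_k - a_k` run over `k ≠ j` in order (realized via `Fin.succAbove`
and `Fin.snoc`), `A_j = ∑_{k≠j} a_k` and
`M_j = (s_j + A_j - 1)!/((s_j - 1)! ∏_{k≠j} a_k!)`. -/
theorem mt_first_reduction (d : ℕ) (s' : Fin (d + 1) → ℕ) (s : ℕ)
    (hs' : ∀ j, 0 < s' j) (hs : 0 < s)
    (hT : Summable (MTterm (d + 1) s' s))
    (hTl : ∀ (j : Fin (d + 1)) (a : ∀ i : Fin d, Fin (s' (j.succAbove i))),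
      Summable (Tlterm (d + 1) d
        (Fin.snoc (fun i : Fin d => s' (j.succAbove i) - (a i : ℕ))
          (s + s' j + ∑ i : Fin d, (a i : ℕ))))) :
    MT (d + 1) s' s =
      ∑ j : Fin (d + 1), ∑ a : (∀ i : Fin d, Fin (s' (j.succAbove i))),
        ((Nat.factorial (s' j + (∑ i : Fin d, (a i : ℕ)) - 1) : ℝ) /
            ((Nat.factorial (s' j - 1) * ∏ i : Fin d, Nat.factorial (a i) : ℕ) : ℝ)) *
          Tl (d + 1) d
            (Fin.snoc (fun i : Fin d => s' (j.succAbove i) - (a i : ℕ))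
              (s + s' j + ∑ i : Fin d, (a i : ℕ))) := by
  classical
  have hpt : ∀ m : {m : Fin (d+1) → ℕ // ∀ k, 0 < m k},
      MTterm (d+1) s' s m
        = ∑ j : Fin (d+1), ∑ a : (∀ i : Fin d, Fin (s' (j.succAbove i))),
            ((Nat.factorial (s' j + (∑ i : Fin d, (a i : ℕ)) - 1) : ℝ) /
              ((Nat.factorial (s' j - 1) * ∏ i : Fin d, Nat.factorial (a i) : ℕ) : ℝ))
              * Tlterm (d+1) d (Fin.snoc (fun i : Fin d => s' (j.succAbove i) - (a i : ℕ))
                  (s + s' j + ∑ i : Fin d, (a i : ℕ))) ((mEquiv d j) m) := by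
    intro m
    have hx : ∀ k, 0 < ((m.1 k : ℝ)) := fun k => by exact_mod_cast m.2 k
    have h0 : MTterm (d+1) s' s m
        = (∏ k, ((m.1 k : ℝ)) ^ s' k)⁻¹ * ((∑ k, ((m.1 k : ℝ))) ^ s)⁻¹ := by
      rw [MTterm, one_div, mul_inv]
      norm_cast
    have hPF := PF d (fun k => ((m.1 k : ℝ))) hx (∑ k, s' k) s' (fun k => hs' k) le_rfl s
    rw [h0, hPF]
    refine Finset.sum_congr rfl fun j _ => ?_
    rw [big, ← sum_pi_fin_eq d (fun i => s' (j.succAbove i))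
      (fun a => Mc d (s' j - 1) a * gg d (fun k => ((m.1 k : ℝ))) s' s j a)]
    refine Finset.sum_congr rfl fun a _ => ?_
    congr 1
    · rw [Mc]
      have hnum : s' j - 1 + ∑ i, (a i : ℕ) = s' j + (∑ i : Fin d, (a i : ℕ)) - 1 := by
        have := hs' j; omega
      rw [hnum]
      push_cast
      ring
    · exact (Tlterm_eq_gg d s' s j (fun i => (a i : ℕ)) m).symm
  rw [MT, tsum_congr hpt]
  have hsummand : ∀ (j : Fin (d+1)) (a : ∀ i : Fin d, Fin (s' (j.succAbove i))),
      Summable (fun m => Tlterm (d+1) d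
        (Fin.snoc (fun i : Fin d => s' (j.succAbove i) - (a i : ℕ))
          (s + s' j + ∑ i : Fin d, (a i : ℕ))) ((mEquiv d j) m)) :=
    fun j a => (Equiv.summable_iff (mEquiv d j)
      (f := Tlterm (d+1) d (Fin.snoc (fun i : Fin d => s' (j.succAbove i) - (a i : ℕ))
        (s + s' j + ∑ i : Fin d, (a i : ℕ))))).mpr (hTl j a)
  rw [Summable.tsum_finsetSum (fun j _ => summable_sum fun a _ => (hsummand j a).mul_left _)]
  refine Finset.sum_congr rfl fun j _ => ?_
  rw [Summable.tsum_finsetSum (fun a _ => (hsummand j a).mul_left _)]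
  refine Finset.sum_congr rfl fun a _ => ?_
  rw [tsum_mul_left]
  congr 1
  rw [Tl]
  exact (mEquiv d j).tsum_eq _
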